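/- Let K ⊂ ℂ be compact, connected, and full, and fix a countable set Q of external angles whose rays land. Then every fiber of K is compact, connected, and full. -/

import Mathlib

open Set Metric Filter Topology

/-- Image of the external ray of `K` at angle `θ` (in turns), where `ψ` is the
inverse of the normalized Riemann map, defined on `{|z| > 1}`. -/
noncomputable def rayImg (ψ : ℂ → ℂ) (θ : ℝ) : Set ℂ :=
  (fun r : ℝ => ψ ((r : ℂ) * Complex.exp (2 * Real.pi * θ * Complex.I))) '' Set.Ioi 1

/-- The external ray at angle `θ` lands at `z`. -/
def Lands (ψ : ℂ → ℂ) (θ : ℝ) (z : ℂ) : Prop :=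
  Filter.Tendsto (fun r : ℝ => ψ ((r : ℂ) * Complex.exp (2 * Real.pi * θ * Complex.I)))
    (nhdsWithin 1 (Set.Ioi 1)) (nhds z)

/-- `ψ` is the inverse of the normalized Riemann map of `ℂ ∖ K`: a conformal
bijection from the exterior of the closed unit disk onto `ℂ ∖ K`, tangent (up to a
positive real factor, the conformal radius) to the identity at infinity. -/
def IsRiemannMap (K : Set ℂ) (ψ : ℂ → ℂ) : Prop :=
  Set.BijOn ψ {z : ℂ | 1 < ‖z‖} Kᶜ ∧
  DifferentiableOn ℂ ψ {z : ℂ | 1 < ‖z‖} ∧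
  ∃ lam : ℝ, 0 < lam ∧
    Filter.Tendsto (fun z : ℂ => ψ z / z) (Filter.comap (fun z : ℂ => ‖z‖) Filter.atTop)
      (nhds (lam : ℂ))

/-- A set is full if its complement has no bounded connected components. -/
def IsFull (K : Set ℂ) : Prop :=
  ∀ w ∉ K, ¬ Bornology.IsBounded (connectedComponentIn Kᶜ w)

/-- A separation line for `K` with respect to the angle set `Q`: either two rays
with angles in `Q` landing at a common point, or two such rays landing at distinct
points joined by a simple arc through the interior of `K`. -/
def IsSepLine (K : Set ℂ) (ψ : ℂ → ℂ) (Q : Set ℝ) (Γ : Set ℂ) : Prop :=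
  ∃ θ₁ ∈ Q, ∃ θ₂ ∈ Q, ∃ z₁ z₂ : ℂ,
    Lands ψ θ₁ z₁ ∧ Lands ψ θ₂ z₂ ∧
    (θ₁ : AddCircle (1 : ℝ)) ≠ (θ₂ : AddCircle (1 : ℝ)) ∧
    ((z₁ = z₂ ∧ Γ = rayImg ψ θ₁ ∪ rayImg ψ θ₂ ∪ {z₁}) ∨
     (z₁ ≠ z₂ ∧ ∃ σ : ℝ → ℂ,
        ContinuousOn σ (Set.Icc 0 1) ∧ Set.InjOn σ (Set.Icc 0 1) ∧
        σ 0 = z₁ ∧ σ 1 = z₂ ∧ σ '' Set.Ioo 0 1 ⊆ interior K ∧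
        Γ = rayImg ψ θ₁ ∪ rayImg ψ θ₂ ∪ σ '' Set.Icc 0 1))

/-- Two points can be separated if some separation line avoiding both puts them in
different connected components of its complement. -/
def Separates (K : Set ℂ) (ψ : ℂ → ℂ) (Q : Set ℝ) (z z' : ℂ) : Prop :=
  ∃ Γ : Set ℂ, IsSepLine K ψ Q Γ ∧ z ∉ Γ ∧ z' ∉ Γ ∧
    connectedComponentIn Γᶜ z ≠ connectedComponentIn Γᶜ z'

/-- The fiber of `z`: the connected component containing `z` of the set of points
of `K` that cannot be separated from `z`. -/
noncomputable def fiber (K : Set ℂ) (ψ : ℂ → ℂ) (Q : Set ℝ) (z : ℂ) : Set ℂ :=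
  connectedComponentIn {w | w ∈ K ∧ ¬ Separates K ψ Q z w} z

/-- Limit set of the external ray at angle `θ`. -/
noncomputable def limitSet (K : Set ℂ) (ψ : ℂ → ℂ) (θ : ℝ) : Set ℂ :=
  closure (rayImg ψ θ) ∩ K

/-- Impression of the external ray at angle `θ`. -/
noncomputable def impression (K : Set ℂ) (ψ : ℂ → ℂ) (θ : ℝ) : Set ℂ :=
  ⋂ (ε : ℝ) (_ : 0 < ε), closure (⋃ (φ : ℝ) (_ : |φ - θ| < ε), limitSet K ψ φ)



/-- A continuous integer-valued function on `[0,1]` is constant (via IVT). -/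
lemma aux_int_real {h : ℝ → ℝ} (hc : Continuous h)
    (hint : ∀ t ∈ Set.Icc (0:ℝ) 1, ∃ k : ℤ, h t = k) : h 1 = h 0 := by
  by_contra hne
  obtain ⟨k₀, hk₀⟩ := hint 0 ⟨le_rfl, zero_le_one⟩
  obtain ⟨k₁, hk₁⟩ := hint 1 ⟨zero_le_one, le_rfl⟩
  have hIV := intermediate_value_Icc (zero_le_one (α := ℝ)) hc.continuousOn
  have hIV' := intermediate_value_Icc' (zero_le_one (α := ℝ)) hc.continuousOn
  rcases lt_or_gt_of_ne hne with hlt | hlt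
  · -- h 1 < h 0
    have hk : k₁ < k₀ := by exact_mod_cast hk₁ ▸ hk₀ ▸ hlt
    have hk' : (k₁ : ℝ) + 1 ≤ k₀ := by exact_mod_cast hk
    have hy : (k₁ : ℝ) + 1/2 ∈ Set.Icc (h 1) (h 0) := by
      constructor
      · rw [hk₁]; linarith
      · rw [hk₀]; linarith
    obtain ⟨t, ht, hteq⟩ := hIV' hy
    obtain ⟨k, hkk⟩ := hint t ht
    have : (2*k : ℤ) = 2*k₁ + 1 := by
      have : (2*k : ℝ) = 2*k₁ + 1 := by
        have h5 : (k:ℝ) = (k₁:ℝ) + 1/2 := by rw [← hkk]; exact hteq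
        linarith
      exact_mod_cast this
    omega
  · -- h 0 < h 1
    have hk : k₀ < k₁ := by exact_mod_cast hk₀ ▸ hk₁ ▸ hlt
    have hk' : (k₀ : ℝ) + 1 ≤ k₁ := by exact_mod_cast hk
    have hy : (k₀ : ℝ) + 1/2 ∈ Set.Icc (h 0) (h 1) := by
      constructor
      · rw [hk₀]; linarith
      · rw [hk₁]; linarith
    obtain ⟨t, ht, hteq⟩ := hIV hy
    obtain ⟨k, hkk⟩ := hint t ht
    have : (2*k : ℤ) = 2*k₀ + 1 := by
      have : (2*k : ℝ) = 2*k₀ + 1 := by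
        have h5 : (k:ℝ) = (k₀:ℝ) + 1/2 := by rw [← hkk]; exact hteq
        linarith
      exact_mod_cast this
    omega

/-- Two continuous logarithms of the same function on `[0,1]` have the same increment. -/
lemma aux_logdiff {L L' f : ℝ → ℂ} (hL : Continuous L) (hL' : Continuous L')
    (heL : ∀ t ∈ Set.Icc (0:ℝ) 1, Complex.exp (L t) = f t)
    (heL' : ∀ t ∈ Set.Icc (0:ℝ) 1, Complex.exp (L' t) = f t) :
    L 1 - L 0 = L' 1 - L' 0 := by
  have hker : ∀ t ∈ Set.Icc (0:ℝ) 1, ∃ k : ℤ, L t - L' t = k * (2 * Real.pi * Complex.I) := by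
    intro t ht
    have h1 : Complex.exp (L t - L' t) = 1 := by
      rw [Complex.exp_sub, heL t ht, heL' t ht, div_self]
      rw [← heL t ht]; exact Complex.exp_ne_zero _
    exact Complex.exp_eq_one_iff.mp h1
  have hform : ∀ k : ℤ, ((k : ℂ) * (2 * Real.pi * Complex.I)).im = k * (2 * Real.pi) ∧
      ((k : ℂ) * (2 * Real.pi * Complex.I)).re = 0 := by
    intro k
    have : ((k : ℂ) * (2 * Real.pi * Complex.I)) = Complex.I * ((k * (2*Real.pi) : ℝ) : ℂ) := by
      push_cast; ring
    rw [this]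
    constructor
    · simp
    · simp
  have him : (L 1 - L' 1).im = (L 0 - L' 0).im := by
    have h2 := aux_int_real (h := fun t => (L t - L' t).im / (2 * Real.pi))
      ((Complex.continuous_im.comp (hL.sub hL')).div_const _)
      (by
        intro t ht
        obtain ⟨k, hk⟩ := hker t ht
        refine ⟨k, ?_⟩
        rw [hk, (hform k).1]
        field_simp)
    have hpi : (2 * Real.pi) ≠ 0 := by positivity
    field_simp at h2
    exact h2
  have hre1 : (L 1 - L' 1).re = 0 := by
    obtain ⟨k, hk⟩ := hker 1 ⟨zero_le_one, le_rfl⟩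
    rw [hk, (hform k).2]
  have hre0 : (L 0 - L' 0).re = 0 := by
    obtain ⟨k, hk⟩ := hker 0 ⟨le_rfl, zero_le_one⟩
    rw [hk, (hform k).2]
  have heq : L 1 - L' 1 = L 0 - L' 0 := by
    apply Complex.ext
    · rw [hre1, hre0]
    · exact him
  linear_combination heq

/-- Points near `1` lie in the slit plane. -/
lemma aux_near_one {r : ℂ} (h : ‖r - 1‖ < 1) : r ∈ Complex.slitPlane := by
  rw [Complex.mem_slitPlane_iff]
  left
  have h2 : (1 - r).re ≤ ‖1 - r‖ := Complex.re_le_norm _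
  have h3 : ‖1 - r‖ < 1 := by
    rw [show (1:ℂ) - r = -(r - 1) by ring, norm_neg]
    exact h
  have h4 : (1 - r).re = 1 - r.re := by simp
  linarith

lemma aux_near_one_ne {r : ℂ} (h : ‖r - 1‖ < 1) : r ≠ 0 := by
  intro h0
  rw [h0] at h
  norm_num at h
/-- Existence of a continuous logarithm of a nonvanishing continuous function on `[0,1]`. -/
lemma aux_exists_log {f : ℝ → ℂ} (hf : Continuous f)
    (hnz : ∀ t ∈ Set.Icc (0:ℝ) 1, f t ≠ 0) :
    ∃ g : ℝ → ℂ, Continuous g ∧ ∀ t ∈ Set.Icc (0:ℝ) 1, Complex.exp (g t) = f t := by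
  classical
  obtain ⟨t₀, ht₀, hmin⟩ := isCompact_Icc.exists_isMinOn ⟨0, ⟨le_rfl, zero_le_one⟩⟩
      (continuous_norm.comp hf).continuousOn
  set m := ‖f t₀‖ with hm
  have hmpos : 0 < m := norm_pos_iff.mpr (hnz t₀ ht₀)
  obtain ⟨δ, hδpos, hδ⟩ := Metric.uniformContinuousOn_iff.mp
      (isCompact_Icc.uniformContinuousOn_of_continuous hf.continuousOn) m hmpos
  have key : ∀ n : ℕ, ∀ b ∈ Set.Icc (0:ℝ) 1, b ≤ n * (δ/2) →
      ∃ g : ℝ → ℂ, Continuous g ∧ ∀ t ∈ Set.Icc (0:ℝ) b, Complex.exp (g t) = f t := by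
    intro n
    induction n with
    | zero =>
      intro b hb hble
      have hb0 : b = 0 := le_antisymm (by simpa using hble) hb.1
      refine ⟨fun _ => Complex.log (f 0), continuous_const, ?_⟩
      intro t ht
      have ht0 : t = 0 := le_antisymm (hb0 ▸ ht.2) ht.1
      rw [ht0, Complex.exp_log (hnz 0 ⟨le_rfl, zero_le_one⟩)]
    | succ n ih =>
      intro b hb hble
      set b' := max 0 (b - δ/2) with hb'def
      have hb'mem : b' ∈ Set.Icc (0:ℝ) 1 :=
        ⟨le_max_left _ _, max_le zero_le_one (by linarith [hb.2])⟩
      have hb'le : b' ≤ n * (δ/2) := by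
        apply max_le (by positivity)
        push_cast at hble ⊢
        linarith
      obtain ⟨g₁, hg₁c, hg₁⟩ := ih b' hb'mem hb'le
      have hb'b : b' ≤ b := max_le hb.1 (by linarith)
      have hbb' : b - b' ≤ δ/2 := by
        have := le_max_right 0 (b - δ/2)
        rw [hb'def]
        linarith [le_max_right 0 (b - δ/2)]
      set cl := fun t : ℝ => max b' (min b t) with hcldef
      have hclc : Continuous cl := continuous_const.max (continuous_const.min continuous_id)
      have hclmem : ∀ t, cl t ∈ Set.Icc b' b :=
        fun t => ⟨le_max_left _ _, max_le hb'b (min_le_left _ _)⟩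
      have hcleq : ∀ t ∈ Set.Icc b' b, cl t = t := by
        intro t ht
        rw [hcldef]
        simp only
        rw [min_eq_right ht.2, max_eq_right ht.1]
      have hIccsub : Set.Icc b' b ⊆ Set.Icc (0:ℝ) 1 :=
        fun t ht => ⟨le_trans hb'mem.1 ht.1, le_trans ht.2 hb.2⟩
      have hfb' : f b' ≠ 0 := hnz b' hb'mem
      have hratio : ∀ t, ‖f (cl t) / f b' - 1‖ < 1 := by
        intro t
        have h1 : dist (cl t) b' < δ := by
          rw [Real.dist_eq, abs_of_nonneg (by linarith [(hclmem t).1] : (0:ℝ) ≤ cl t - b')]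
          have h2 := (hclmem t).2
          linarith
        have h2 := hδ (cl t) (hIccsub (hclmem t)) b' hb'mem h1
        rw [div_sub_one hfb', norm_div, div_lt_one (norm_pos_iff.mpr hfb')]
        calc ‖f (cl t) - f b'‖ = dist (f (cl t)) (f b') := (Complex.dist_eq _ _).symm
          _ < m := h2
          _ ≤ ‖f b'‖ := isMinOn_iff.mp hmin b' hb'mem
      have hrs : ∀ t, f (cl t) / f b' ∈ Complex.slitPlane := fun t => aux_near_one (hratio t)
      have hrnz : ∀ t, f (cl t) / f b' ≠ 0 := fun t => aux_near_one_ne (hratio t)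
      set g₂ := fun t => Complex.log (f b') + Complex.log (f (cl t) / f b') with hg₂def
      have hg₂c : Continuous g₂ := by
        apply continuous_const.add
        have hh : Continuous fun t => f (cl t) / f b' := (hf.comp hclc).div_const _
        exact continuous_iff_continuousAt.mpr fun t => hh.continuousAt.clog (hrs t)
      have hg₂e : ∀ t ∈ Set.Icc b' b, Complex.exp (g₂ t) = f t := by
        intro t ht
        rw [hg₂def]
        simp only
        rw [Complex.exp_add, Complex.exp_log hfb', Complex.exp_log (hrnz t), hcleq t ht]
        field_simp
      refine ⟨fun t => if t ≤ b' then g₁ t else g₂ t + (g₁ b' - g₂ b'), ?_, ?_⟩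
      · apply Continuous.if_le hg₁c (hg₂c.add continuous_const) continuous_id continuous_const
        intro t ht
        rw [show t = b' from ht]
        simp only [Pi.add_apply]
        ring
      · intro t ht
        show Complex.exp (if t ≤ b' then g₁ t else g₂ t + (g₁ b' - g₂ b')) = f t
        by_cases hcase : t ≤ b'
        · rw [if_pos hcase]
          exact hg₁ t ⟨ht.1, hcase⟩
        · rw [if_neg hcase]
          push_neg at hcase
          have htm : t ∈ Set.Icc b' b := ⟨le_of_lt hcase, ht.2⟩
          rw [Complex.exp_add, hg₂e t htm, Complex.exp_sub, hg₁ b' ⟨hb'mem.1, le_rfl⟩,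
            hg₂e b' ⟨le_rfl, hb'b⟩, div_self hfb', mul_one]
  obtain ⟨n, hn⟩ := exists_nat_ge (1 / (δ/2))
  refine key n 1 ⟨zero_le_one, le_rfl⟩ ?_
  rw [div_le_iff₀ (by positivity)] at hn
  linarith
/-- Degree argument: there is no continuous family of loops avoiding `0` joining a
constant loop to the standard circle loop. -/
lemma aux_deg (Φ : ℝ → ℝ → ℂ) (hc : Continuous fun q : ℝ × ℝ => Φ q.1 q.2)
    (hnz : ∀ s t, Φ s t ≠ 0) (hloop : ∀ s, Φ s 0 = Φ s 1)
    (c : ℂ) (h0 : ∀ t : ℝ, Φ 0 t = c) (R : ℝ) (hR : 0 < R)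
    (h1 : ∀ t : ℝ, Φ 1 t = (R:ℂ) * Complex.exp (2 * Real.pi * t * Complex.I)) : False := by
  classical
  have hΦs : ∀ s, Continuous (Φ s) := fun s => hc.comp (continuous_const.prodMk continuous_id)
  set Ksq := (Set.Icc (0:ℝ) 1) ×ˢ (Set.Icc (0:ℝ) 1) with hKsq
  have hKc : IsCompact Ksq := isCompact_Icc.prod isCompact_Icc
  obtain ⟨q₀, hq₀, hminq⟩ := hKc.exists_isMinOn
      ⟨((0:ℝ),(0:ℝ)), ⟨⟨le_rfl, zero_le_one⟩, ⟨le_rfl, zero_le_one⟩⟩⟩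
      (continuous_norm.comp hc).continuousOn
  set m := ‖Φ q₀.1 q₀.2‖ with hm
  have hmpos : 0 < m := norm_pos_iff.mpr (hnz _ _)
  obtain ⟨δ, hδpos, hδ⟩ := Metric.uniformContinuousOn_iff.mp
      (hKc.uniformContinuousOn_of_continuous hc.continuousOn) m hmpos
  set cl := fun t : ℝ => max 0 (min 1 t) with hcldef
  have hclc : Continuous cl := continuous_const.max (continuous_const.min continuous_id)
  have hclmem : ∀ t, cl t ∈ Set.Icc (0:ℝ) 1 :=
    fun t => ⟨le_max_left _ _, max_le zero_le_one (min_le_left _ _)⟩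
  have hcleq : ∀ t ∈ Set.Icc (0:ℝ) 1, cl t = t := by
    intro t ht
    rw [hcldef]
    simp only
    rw [min_eq_right ht.2, max_eq_right ht.1]
  have key : ∀ n : ℕ, ∀ s ∈ Set.Icc (0:ℝ) 1, s ≤ n * (δ/2) →
      ∀ L₀ L : ℝ → ℂ, Continuous L₀ → Continuous L →
      (∀ t ∈ Set.Icc (0:ℝ) 1, Complex.exp (L₀ t) = Φ 0 t) →
      (∀ t ∈ Set.Icc (0:ℝ) 1, Complex.exp (L t) = Φ s t) →
      L 1 - L 0 = L₀ 1 - L₀ 0 := by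
    intro n
    induction n with
    | zero =>
      intro s hs hle L₀ L hL₀c hLc hL₀ hL
      have hs0 : s = 0 := le_antisymm (by simpa using hle) hs.1
      subst hs0
      exact aux_logdiff hLc hL₀c hL hL₀
    | succ n ih =>
      intro s hs hle L₀ L hL₀c hLc hL₀ hL
      set s' := max 0 (s - δ/2) with hs'def
      have hs'mem : s' ∈ Set.Icc (0:ℝ) 1 :=
        ⟨le_max_left _ _, max_le zero_le_one (by linarith [hs.2])⟩
      have hs'le : s' ≤ n * (δ/2) := by
        apply max_le (by positivity)
        push_cast at hle ⊢
        linarith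
      have hss' : s' ≤ s := max_le hs.1 (by linarith)
      have hsd : s - s' ≤ δ/2 := by
        rw [hs'def]
        linarith [le_max_right 0 (s - δ/2)]
      have hclose : ∀ t : ℝ, ‖Φ s (cl t) / Φ s' (cl t) - 1‖ < 1 := by
        intro t
        have hd : dist ((s, cl t) : ℝ × ℝ) ((s', cl t) : ℝ × ℝ) < δ := by
          rw [Prod.dist_eq]
          simp only [dist_self]
          rw [max_eq_left dist_nonneg, Real.dist_eq, abs_of_nonneg (by linarith)]
          linarith
        have h2 := hδ (s, cl t) ⟨hs, hclmem t⟩ (s', cl t) ⟨hs'mem, hclmem t⟩ hd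
        rw [div_sub_one (hnz s' (cl t)), norm_div, div_lt_one (norm_pos_iff.mpr (hnz s' (cl t)))]
        calc ‖Φ s (cl t) - Φ s' (cl t)‖
            = dist (Φ s (cl t)) (Φ s' (cl t)) := (Complex.dist_eq _ _).symm
          _ < m := h2
          _ ≤ ‖Φ s' (cl t)‖ := isMinOn_iff.mp hminq (s', cl t) ⟨hs'mem, hclmem t⟩
      set r := fun t => Φ s (cl t) / Φ s' (cl t) with hrdef
      have hrc : Continuous r := ((hΦs s).comp hclc).div ((hΦs s').comp hclc) fun t => hnz _ _
      have hrnz : ∀ t, r t ≠ 0 := fun t => div_ne_zero (hnz _ _) (hnz _ _)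
      have hlogrc : Continuous fun t => Complex.log (r t) :=
        continuous_iff_continuousAt.mpr fun t => hrc.continuousAt.clog (aux_near_one (hclose t))
      set L' := fun t => L t - Complex.log (r t) with hL'def
      have hL'c : Continuous L' := hLc.sub hlogrc
      have hL'e : ∀ t ∈ Set.Icc (0:ℝ) 1, Complex.exp (L' t) = Φ s' t := by
        intro t ht
        show Complex.exp (L t - Complex.log (r t)) = Φ s' t
        rw [Complex.exp_sub, hL t ht, Complex.exp_log (hrnz t)]
        show Φ s t / (Φ s (cl t) / Φ s' (cl t)) = Φ s' t
        rw [hcleq t ht, div_div_eq_mul_div, mul_comm, mul_div_assoc, div_self (hnz s t), mul_one]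
      have hIH := ih s' hs'mem hs'le L₀ L' hL₀c hL'c hL₀ hL'e
      have hr10 : r 1 = r 0 := by
        show Φ s (cl 1) / Φ s' (cl 1) = Φ s (cl 0) / Φ s' (cl 0)
        rw [hcleq 1 ⟨zero_le_one, le_rfl⟩, hcleq 0 ⟨le_rfl, zero_le_one⟩,
          ← hloop s, ← hloop s']
      have hL'val : L' 1 - L' 0 = L 1 - L 0 := by
        show (L 1 - Complex.log (r 1)) - (L 0 - Complex.log (r 0)) = L 1 - L 0
        rw [hr10]
        ring
      rw [← hIH, hL'val]
  obtain ⟨n, hn⟩ := exists_nat_ge (1 / (δ/2))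
  have hcne : c ≠ 0 := by rw [← h0 0]; exact hnz 0 0
  have hL₀e : ∀ t ∈ Set.Icc (0:ℝ) 1, Complex.exp ((fun _ : ℝ => Complex.log c) t) = Φ 0 t := by
    intro t _
    rw [h0 t]
    exact Complex.exp_log hcne
  set L₁ := fun t : ℝ => (Real.log R : ℂ) + 2 * Real.pi * t * Complex.I with hL₁def
  have hL₁c : Continuous L₁ := by
    apply continuous_const.add
    exact (continuous_const.mul Complex.continuous_ofReal).mul continuous_const
  have hL₁e : ∀ t ∈ Set.Icc (0:ℝ) 1, Complex.exp (L₁ t) = Φ 1 t := by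
    intro t _
    rw [h1 t]
    show Complex.exp ((Real.log R : ℂ) + 2 * Real.pi * t * Complex.I) = _
    rw [Complex.exp_add]
    congr 1
    rw [← Complex.ofReal_exp, Real.exp_log hR]
  have hkey := key n 1 ⟨zero_le_one, le_rfl⟩
    (by rw [div_le_iff₀ (by positivity)] at hn; linarith)
    (fun _ => Complex.log c) L₁ continuous_const hL₁c hL₀e hL₁e
  have hval : L₁ 1 - L₁ 0 = 2 * Real.pi * Complex.I := by
    show ((Real.log R : ℂ) + 2 * Real.pi * (1:ℝ) * Complex.I)
        - ((Real.log R : ℂ) + 2 * Real.pi * (0:ℝ) * Complex.I) = 2 * Real.pi * Complex.I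
    push_cast
    ring
  rw [hval, sub_self] at hkey
  have : (Real.pi : ℂ) = 0 ∨ Complex.I = 0 := by
    rcases mul_eq_zero.mp hkey with h | h
    · rcases mul_eq_zero.mp h with h' | h'
      · norm_num at h'
      · exact Or.inl h'
    · exact Or.inr h
  rcases this with h | h
  · exact Real.pi_ne_zero (by exact_mod_cast h)
  · exact Complex.I_ne_zero h
/-- No bounded open set admits a continuous map to its closure's complement-point
that is the identity on its frontier. -/
lemma aux_master {C : Set ℂ} (hCo : IsOpen C) (hCb : Bornology.IsBounded C)
    {p : ℂ} (hp : p ∈ C) {F : ℂ → ℂ} (hFc : Continuous F) (hFp : ∀ w, F w ≠ p)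
    (hFid : ∀ w ∈ frontier C, F w = w) : False := by
  classical
  obtain ⟨R₀, hR₀pos, hR₀sub⟩ := hCb.closure.subset_closedBall_lt 0 p
  set R := R₀ + 1 with hRdef
  have hR'pos : 0 < R := by linarith
  have hRb : closure C ⊆ Metric.ball p R := fun w hw =>
    lt_of_le_of_lt (Metric.mem_closedBall.mp (hR₀sub hw)) (by linarith)
  set H := fun w => if w ∈ closure C then F w else w with hHdef
  have hfr : ∀ w ∈ frontier (closure C), F w = w := fun w hw =>
    hFid w (frontier_closure_subset hw)
  have hHc : Continuous H := Continuous.if hfr hFc continuous_id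
  have hHp : ∀ w, H w ≠ p := by
    intro w
    show (if w ∈ closure C then F w else w) ≠ p
    split_ifs with hw
    · exact hFp w
    · intro he
      exact hw (he ▸ subset_closure hp)
  have hHout : ∀ w, w ∉ closure C → H w = w := by
    intro w hw
    show (if w ∈ closure C then F w else w) = w
    rw [if_neg hw]
  have hHin : ∀ w, w ∈ closure C → H w = F w := by
    intro w hw
    show (if w ∈ closure C then F w else w) = F w
    rw [if_pos hw]
  set Φ := fun (s t : ℝ) => H (p + ((s * R : ℝ) : ℂ) * Complex.exp (2 * Real.pi * t * Complex.I)) - p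
    with hΦdef
  have habs : ∀ t : ℝ, ‖Complex.exp (2 * Real.pi * t * Complex.I)‖ = 1 := by
    intro t
    rw [show (2 * (Real.pi:ℂ) * (t:ℂ) * Complex.I) = ((2 * Real.pi * t : ℝ) : ℂ) * Complex.I by
      push_cast; ring]
    exact Complex.norm_exp_ofReal_mul_I _
  apply aux_deg Φ ?_ ?_ ?_ (H p - p) ?_ R hR'pos ?_
  · -- continuity
    apply Continuous.sub ?_ continuous_const
    apply hHc.comp
    apply continuous_const.add
    apply Continuous.mul
    · exact Complex.continuous_ofReal.comp (continuous_fst.mul continuous_const)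
    · apply Complex.continuous_exp.comp
      exact (continuous_const.mul (Complex.continuous_ofReal.comp continuous_snd)).mul
        continuous_const
  · intro s t
    exact sub_ne_zero.mpr (hHp _)
  · intro s
    show H (p + _ * Complex.exp (2 * Real.pi * (0:ℝ) * Complex.I)) - p
        = H (p + _ * Complex.exp (2 * Real.pi * (1:ℝ) * Complex.I)) - p
    norm_num [Complex.exp_two_pi_mul_I]
  · intro t
    show H (p + (((0:ℝ) * R : ℝ) : ℂ) * _) - p = H p - p
    norm_num
  · intro t
    have hmemout : p + ((1 * R : ℝ) : ℂ) * Complex.exp (2 * Real.pi * t * Complex.I) ∉ closure C := by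
      intro hmem
      have h2 := hRb hmem
      rw [Metric.mem_ball, Complex.dist_eq, add_sub_cancel_left, norm_mul, habs t, mul_one,
        Complex.norm_real, Real.norm_eq_abs, one_mul, abs_of_pos hR'pos] at h2
      exact lt_irrefl _ h2
    show H (p + ((1 * R : ℝ) : ℂ) * Complex.exp (2 * Real.pi * t * Complex.I)) - p = _
    rw [hHout _ hmemout, add_sub_cancel_left, one_mul]

/-- A continuous retraction-avoiding map for an arc: a continuous map of the plane
fixing the arc pointwise and avoiding a point off the arc. -/
lemma aux_arc_retract {σ : ℝ → ℂ} (hσc : ContinuousOn σ (Set.Icc 0 1))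
    (hσi : Set.InjOn σ (Set.Icc 0 1)) {p : ℂ} (hp : p ∉ σ '' Set.Icc 0 1) :
    ∃ F : ℂ → ℂ, Continuous F ∧ (∀ w, F w ≠ p) ∧ ∀ a ∈ σ '' Set.Icc 0 1, F a = a := by
  classical
  have hAcomp : IsCompact (σ '' Set.Icc 0 1) := isCompact_Icc.image_of_continuousOn hσc
  have hAclosed : IsClosed (σ '' Set.Icc 0 1) := hAcomp.isClosed
  set cl := fun t : ℝ => max 0 (min 1 t) with hcldef
  have hclc : Continuous cl := continuous_const.max (continuous_const.min continuous_id)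
  have hclmem : ∀ t, cl t ∈ Set.Icc (0:ℝ) 1 :=
    fun t => ⟨le_max_left _ _, max_le zero_le_one (min_le_left _ _)⟩
  have hcleq : ∀ t ∈ Set.Icc (0:ℝ) 1, cl t = t := by
    intro t ht
    rw [hcldef]
    simp only
    rw [min_eq_right ht.2, max_eq_right ht.1]
  have hfc : Continuous fun t => σ (cl t) - p :=
    (hσc.comp_continuous hclc hclmem).sub continuous_const
  have hfnz : ∀ t ∈ Set.Icc (0:ℝ) 1, σ (cl t) - p ≠ 0 := by
    intro t ht
    rw [hcleq t ht]
    exact sub_ne_zero.mpr fun he => hp (he ▸ Set.mem_image_of_mem σ ht)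
  obtain ⟨g, hgc, hge⟩ := aux_exists_log hfc hfnz
  haveI : CompactSpace (Set.Icc (0:ℝ) 1) := isCompact_iff_compactSpace.mp isCompact_Icc
  have hbij : Function.Bijective
      (fun t : Set.Icc (0:ℝ) 1 => (⟨σ t, Set.mem_image_of_mem σ t.2⟩ : σ '' Set.Icc 0 1)) := by
    constructor
    · intro t₁ t₂ h12
      exact Subtype.ext (hσi t₁.2 t₂.2 (congrArg Subtype.val h12))
    · rintro ⟨a, ha⟩
      obtain ⟨t, ht, rfl⟩ := ha
      exact ⟨⟨t, ht⟩, rfl⟩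
  have hec : Continuous (Equiv.ofBijective _ hbij) := by
    apply Continuous.subtype_mk
    exact hσc.restrict
  set h := hec.homeoOfEquivCompactToT2 with hhdef
  set τ : (σ '' Set.Icc 0 1) → ℝ := fun a => ((h.symm a : Set.Icc (0:ℝ) 1) : ℝ) with hτdef
  have hτc : Continuous τ := continuous_subtype_val.comp h.symm.continuous
  have hτmem : ∀ a, τ a ∈ Set.Icc (0:ℝ) 1 := fun a => (h.symm a).2
  have hστ : ∀ a : (σ '' Set.Icc 0 1), σ (τ a) = a := by
    intro a
    exact congrArg Subtype.val (h.apply_symm_apply a)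
  obtain ⟨T, hT⟩ := ContinuousMap.exists_restrict_eq hAclosed ⟨τ, hτc⟩
  have hTa : ∀ a : (σ '' Set.Icc 0 1), T a = τ a := fun a => DFunLike.congr_fun hT a
  refine ⟨fun w => p + Complex.exp (g (cl (T w))), ?_, ?_, ?_⟩
  · exact continuous_const.add
      (Complex.continuous_exp.comp (hgc.comp (hclc.comp T.continuous)))
  · intro w hw
    exact Complex.exp_ne_zero _ (add_eq_left.mp hw)
  · intro a ha
    have h1 : T a = τ ⟨a, ha⟩ := hTa ⟨a, ha⟩
    show p + Complex.exp (g (cl (T a))) = a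
    rw [h1, hcleq _ (hτmem _), hge _ (hτmem _), hcleq _ (hτmem _), hστ ⟨a, ha⟩]
    ring
lemma aux_abs_rE (r θ : ℝ) (hr : 0 ≤ r) :
    ‖(r:ℂ) * Complex.exp (2 * Real.pi * θ * Complex.I)‖ = r := by
  rw [norm_mul, Complex.norm_real, Real.norm_eq_abs, abs_of_nonneg hr,
    show (2 * (Real.pi:ℂ) * (θ:ℂ) * Complex.I) = ((2 * Real.pi * θ : ℝ) : ℂ) * Complex.I by
      push_cast; ring,
    Complex.norm_exp_ofReal_mul_I, mul_one]

lemma aux_proper {K : Set ℂ} {ψ : ℂ → ℂ} (hψ : IsRiemannMap K ψ) :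
    ∃ c M : ℝ, 0 < c ∧ 1 ≤ M ∧
      ∀ u : ℂ, M ≤ ‖u‖ → c * ‖u‖ ≤ ‖ψ u‖ := by
  obtain ⟨-, -, lam, hlam, htend⟩ := hψ
  have hev : {u : ℂ | ‖ψ u / u - lam‖ < lam / 2} ∈
      Filter.comap (fun z : ℂ => ‖z‖) Filter.atTop := by
    have hball : Metric.ball (lam : ℂ) (lam/2) ∈ nhds (lam : ℂ) :=
      Metric.ball_mem_nhds _ (by positivity)
    have := htend hball
    refine Filter.mem_of_superset this ?_
    intro u hu
    rw [Set.mem_preimage, Metric.mem_ball, Complex.dist_eq] at hu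
    exact hu
  rw [Filter.mem_comap] at hev
  obtain ⟨t, ht, hsub⟩ := hev
  rw [Filter.mem_atTop_sets] at ht
  obtain ⟨M₀, hM₀⟩ := ht
  refine ⟨lam/2, max M₀ 1, by positivity, le_max_right _ _, ?_⟩
  intro u hu
  have humem : ‖ψ u / u - lam‖ < lam / 2 :=
    hsub (hM₀ _ (le_trans (le_max_left _ _) hu))
  have hune : u ≠ 0 := by
    intro h
    rw [h] at hu
    simp only [norm_zero] at hu
    have := le_trans (le_max_right M₀ 1) hu
    linarith
  have h1 : lam / 2 ≤ ‖ψ u / u‖ := by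
    have h2 : ‖(lam:ℂ)‖ = lam := by
      rw [Complex.norm_real, Real.norm_eq_abs, abs_of_pos hlam]
    have h3 : ‖(lam:ℂ)‖ - ‖ψ u / u‖ ≤ ‖(lam:ℂ) - ψ u / u‖ := by
      simpa using norm_sub_norm_le (lam:ℂ) (ψ u / u)
    have h4 : ‖(lam:ℂ) - ψ u / u‖ = ‖ψ u / u - lam‖ := by
      rw [show (lam:ℂ) - ψ u / u = -(ψ u / u - lam) by ring, norm_neg]
    rw [h4, h2] at h3
    linarith
  rw [norm_div, le_div_iff₀ (norm_pos_iff.mpr hune)] at h1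
  linarith

lemma aux_ray_subset {K : Set ℂ} {ψ : ℂ → ℂ} (hψ : IsRiemannMap K ψ) (θ : ℝ) :
    rayImg ψ θ ⊆ Kᶜ := by
  rintro - ⟨r, hr, rfl⟩
  apply hψ.1.mapsTo
  show 1 < ‖_‖
  rw [aux_abs_rE r θ (by linarith [Set.mem_Ioi.mp hr])]
  exact Set.mem_Ioi.mp hr

lemma aux_ray_closure {K : Set ℂ} {ψ : ℂ → ℂ} (hψ : IsRiemannMap K ψ) {θ : ℝ} {z₁ : ℂ}
    (hland : Lands ψ θ z₁) : closure (rayImg ψ θ) ⊆ rayImg ψ θ ∪ {z₁} := by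
  obtain ⟨c, M, hc, hM, hprop⟩ := aux_proper hψ
  intro y hy
  rw [mem_closure_iff_seq_limit] at hy
  obtain ⟨v, hvmem, hvlim⟩ := hy
  have hvmem' : ∀ n, ∃ r : ℝ, r ∈ Set.Ioi (1:ℝ) ∧
      ψ ((r:ℂ) * Complex.exp (2 * Real.pi * θ * Complex.I)) = v n := fun n => hvmem n
  choose rr hrr hfr using hvmem'
  have hrabs : ∀ r : ℝ, 1 < r →
      ‖(r:ℂ) * Complex.exp (2 * Real.pi * θ * Complex.I)‖ = r :=
    fun r h => aux_abs_rE r θ (by linarith)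
  -- eventual bound on v
  have hvb : ∀ᶠ n in Filter.atTop, ‖v n‖ < ‖y‖ + 1 := by
    have h2 : Filter.Tendsto (fun n => ‖v n‖) Filter.atTop (nhds (‖y‖)) :=
      (continuous_norm.continuousAt.tendsto).comp hvlim
    exact h2.eventually_lt_const (by linarith)
  rw [Filter.eventually_atTop] at hvb
  obtain ⟨N, hN⟩ := hvb
  set B := max M ((‖y‖ + 1) / c) with hBdef
  have hrbound : ∀ n ≥ N, rr n ≤ B := by
    intro n hn
    by_contra hgt
    push_neg at hgt
    have hMr : M ≤ rr n := le_of_lt (lt_of_le_of_lt (le_max_left _ _) hgt)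
    have h3 := hprop ((rr n : ℂ) * Complex.exp (2 * Real.pi * θ * Complex.I))
      (by rw [hrabs _ (hrr n)]; exact hMr)
    rw [hrabs _ (hrr n), hfr n] at h3
    have h4 : c * rr n ≤ ‖y‖ + 1 := le_trans h3 (le_of_lt (hN n hn))
    have h5 : rr n ≤ (‖y‖ + 1) / c := by
      rw [le_div_iff₀ hc]
      linarith [h4]
    exact absurd (le_trans h5 (le_max_right _ _)) (not_le.mpr hgt)
  have hmem2 : ∀ n, rr (n + N) ∈ Set.Icc (1:ℝ) B := fun n =>
    ⟨le_of_lt (hrr _), hrbound _ (Nat.le_add_left _ _)⟩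
  obtain ⟨rstar, hrstar, φ, hφmono, hφtend⟩ :=
    (isCompact_Icc (a := (1:ℝ)) (b := B)).tendsto_subseq hmem2
  have hvtend : Filter.Tendsto (fun k => v (φ k + N)) Filter.atTop (nhds y) := by
    apply hvlim.comp
    apply tendsto_atTop_mono (fun k => le_trans hφmono.le_apply (Nat.le_add_right _ _))
      tendsto_id
  rcases eq_or_lt_of_le hrstar.1 with heq | hlt
  · -- lands at z₁
    right
    have htend1 : Filter.Tendsto (fun k => rr (φ k + N)) Filter.atTop
        (nhdsWithin 1 (Set.Ioi 1)) := by
      rw [tendsto_nhdsWithin_iff]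
      exact ⟨heq ▸ hφtend, Filter.Eventually.of_forall fun k => hrr _⟩
    have h2 : Filter.Tendsto (fun k => v (φ k + N)) Filter.atTop (nhds z₁) := by
      have h3 := hland.comp htend1
      have h4 : (fun k => v (φ k + N)) =
          (fun r : ℝ => ψ ((r:ℂ) * Complex.exp (2 * Real.pi * θ * Complex.I)))
            ∘ (fun k => rr (φ k + N)) := by
        funext k
        exact (hfr _).symm
      rw [h4]
      exact h3
    have := tendsto_nhds_unique hvtend h2
    rw [this]
    rfl
  · -- in the ray
    left
    have hcont : ContinuousAt (fun r : ℝ =>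
        ψ ((r:ℂ) * Complex.exp (2 * Real.pi * θ * Complex.I))) rstar := by
      have hopen : IsOpen {w : ℂ | 1 < ‖w‖} :=
        isOpen_lt continuous_const continuous_norm
      have hmem : ((rstar:ℂ) * Complex.exp (2 * Real.pi * θ * Complex.I))
          ∈ {w : ℂ | 1 < ‖w‖} := by
        show 1 < ‖_‖
        rw [aux_abs_rE _ _ (by linarith)]
        exact hlt
      have h5 := hψ.2.1.continuousOn.continuousAt (hopen.mem_nhds hmem)
      have h6 : ContinuousAt (fun r : ℝ =>
          (r:ℂ) * Complex.exp (2 * Real.pi * θ * Complex.I)) rstar :=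
        (Complex.continuous_ofReal.mul continuous_const).continuousAt
      exact ContinuousAt.comp (g := ψ)
        (f := fun r : ℝ => (r:ℂ) * Complex.exp (2 * Real.pi * θ * Complex.I))
        (x := rstar) h5 h6
    have h2 : Filter.Tendsto (fun k => v (φ k + N)) Filter.atTop
        (nhds (ψ ((rstar:ℂ) * Complex.exp (2 * Real.pi * θ * Complex.I)))) := by
      have h3 := hcont.tendsto.comp hφtend
      have h4 : (fun k => v (φ k + N)) =
          (fun r : ℝ => ψ ((r:ℂ) * Complex.exp (2 * Real.pi * θ * Complex.I)))
            ∘ (fun k => rr (φ k + N)) := by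
        funext k
        exact (hfr _).symm
      rw [h4]
      exact h3
    exact ⟨rstar, hlt, (tendsto_nhds_unique hvtend h2).symm⟩

lemma aux_sep_closed {K : Set ℂ} {ψ : ℂ → ℂ} {Q : Set ℝ} {Γ : Set ℂ}
    (hψ : IsRiemannMap K ψ) (hΓ : IsSepLine K ψ Q Γ) : IsClosed Γ := by
  obtain ⟨θ₁, hθ₁, θ₂, hθ₂, z₁, z₂, hl₁, hl₂, hne, hcase⟩ := hΓ
  have hc₁ := aux_ray_closure hψ hl₁
  have hc₂ := aux_ray_closure hψ hl₂
  rcases hcase with ⟨heq, rfl⟩ | ⟨hne', σ, hσc, hσi, hσ0, hσ1, hσint, rfl⟩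
  · apply isClosed_of_closure_subset
    intro w hw
    rw [closure_union, closure_union] at hw
    rcases hw with (h | h) | h
    · rcases hc₁ h with h' | h'
      · exact Or.inl (Or.inl h')
      · exact Or.inr h'
    · rcases hc₂ h with h' | h'
      · exact Or.inl (Or.inr h')
      · exact Or.inr (by rw [heq]; exact h')
    · rw [closure_singleton] at h
      exact Or.inr h
  · have hAclosed : IsClosed (σ '' Set.Icc 0 1) :=
      (isCompact_Icc.image_of_continuousOn hσc).isClosed
    apply isClosed_of_closure_subset
    intro w hw
    rw [closure_union, closure_union] at hw
    rcases hw with (h | h) | h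
    · rcases hc₁ h with h' | h'
      · exact Or.inl (Or.inl h')
      · exact Or.inr ⟨0, ⟨le_rfl, zero_le_one⟩, by rw [hσ0]; exact h'.symm⟩
    · rcases hc₂ h with h' | h'
      · exact Or.inl (Or.inr h')
      · exact Or.inr ⟨1, ⟨zero_le_one, le_rfl⟩, by rw [hσ1]; exact h'.symm⟩
    · rw [hAclosed.closure_eq] at h
      exact Or.inr h

lemma aux_frontier_cci {U : Set ℂ} (hU : IsOpen U) {x : ℂ} :
    frontier (connectedComponentIn U x) ⊆ Uᶜ := by
  intro y hy
  by_contra hyU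
  rw [Set.notMem_compl_iff] at hyU
  have hopen : IsOpen (connectedComponentIn U x) := hU.connectedComponentIn
  rw [hopen.frontier_eq] at hy
  obtain ⟨hyc, hyn⟩ := hy
  have hnbhd : connectedComponentIn U y ∈ nhds y :=
    (hU.connectedComponentIn).mem_nhds (mem_connectedComponentIn hyU)
  obtain ⟨q, hq1, hq2⟩ := mem_closure_iff_nhds.mp hyc _ hnbhd
  have e1 : connectedComponentIn U x = connectedComponentIn U q := connectedComponentIn_eq hq2
  have e2 : connectedComponentIn U y = connectedComponentIn U q := connectedComponentIn_eq hq1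
  exact hyn (e1 ▸ e2 ▸ mem_connectedComponentIn hyU)

lemma aux_no_bounded_comp {K : Set ℂ} {ψ : ℂ → ℂ} {Q : Set ℝ} {Γ : Set ℂ}
    (hK : IsCompact K) (hψ : IsRiemannMap K ψ) (hΓ : IsSepLine K ψ Q Γ)
    {x : ℂ} (hx : x ∉ Γ) (hCb : Bornology.IsBounded (connectedComponentIn Γᶜ x))
    (hCK : connectedComponentIn Γᶜ x ⊆ K) : False := by
  have hclosed : IsClosed Γ := aux_sep_closed hψ hΓ
  have hray1 := aux_ray_subset hψ
  set C := connectedComponentIn Γᶜ x with hCdef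
  have hCo : IsOpen C := hclosed.isOpen_compl.connectedComponentIn
  have hxC : x ∈ C := mem_connectedComponentIn hx
  have hfrΓ : frontier C ⊆ Γ := by
    have h1 := aux_frontier_cci hclosed.isOpen_compl (x := x)
    intro y hy
    have := h1 hy
    simpa using this
  have hfrK : frontier C ⊆ K := fun y hy =>
    closure_minimal hCK hK.isClosed (frontier_subset_closure hy)
  obtain ⟨θ₁, hθ₁, θ₂, hθ₂, z₁, z₂, hl₁, hl₂, hne, hcase⟩ := hΓ
  rcases hcase with ⟨heq, hΓeq⟩ | ⟨hne', σ, hσc, hσi, hσ0, hσ1, hσint, hΓeq⟩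
  · -- common landing point: frontier C ⊆ {z₁}
    have hfr1 : ∀ w ∈ frontier C, w = z₁ := by
      intro w hw
      have h1 := hfrΓ hw
      have h2 := hfrK hw
      rw [hΓeq] at h1
      rcases h1 with (h | h) | h
      · exact absurd h2 (hray1 θ₁ h)
      · exact absurd h2 (hray1 θ₂ h)
      · exact h
    have hz₁x : z₁ ≠ x := by
      intro h
      exact hx (hΓeq ▸ Or.inr (h ▸ rfl))
    exact aux_master hCo hCb hxC continuous_const (fun w => hz₁x)
      (fun w hw => (hfr1 w hw).symm)
  · -- arc case
    have hfrA : frontier C ⊆ σ '' Set.Icc 0 1 := by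
      intro w hw
      have h1 := hfrΓ hw
      have h2 := hfrK hw
      rw [hΓeq] at h1
      rcases h1 with (h | h) | h
      · exact absurd h2 (hray1 θ₁ h)
      · exact absurd h2 (hray1 θ₂ h)
      · exact h
    have hpA : x ∉ σ '' Set.Icc 0 1 := fun h => hx (hΓeq ▸ Or.inr h)
    obtain ⟨F, hFc, hFp, hFid⟩ := aux_arc_retract hσc hσi hpA
    exact aux_master hCo hCb hxC hFc hFp fun w hw => hFid w (hfrA hw)
/-- Let `K ⊂ ℂ` be compact, connected and full, with fibers defined with respect to a
countable set `Q` of external angles whose rays land. Then the fiber of every point of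
`K` is compact, connected and full. -/
theorem fiber_compact_connected_full (K : Set ℂ) (ψ : ℂ → ℂ) (Q : Set ℝ)
    (hK : IsCompact K) (hconn : IsConnected K) (hfull : IsFull K)
    (hψ : IsRiemannMap K ψ) (hQ : Q.Countable)
    (hQland : ∀ θ ∈ Q, ∃ w : ℂ, Lands ψ θ w)
    (z : ℂ) (hz : z ∈ K) :
    IsCompact (fiber K ψ Q z) ∧ IsConnected (fiber K ψ Q z) ∧
      IsFull (fiber K ψ Q z) := by
  classical
  set S := {w : ℂ | w ∈ K ∧ ¬ Separates K ψ Q z w} with hSdef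
  have hzS : z ∈ S := ⟨hz, fun ⟨Γ, hΓ, h1, h2, hne⟩ => hne rfl⟩
  have hsepopen : IsOpen {w : ℂ | Separates K ψ Q z w} := by
    rw [isOpen_iff_mem_nhds]
    intro w hw
    obtain ⟨Γ, hΓ, hz1, hw1, hne⟩ := hw
    have hclosed := aux_sep_closed hψ hΓ
    have hopen : IsOpen (connectedComponentIn Γᶜ w) :=
      hclosed.isOpen_compl.connectedComponentIn
    refine Filter.mem_of_superset (hopen.mem_nhds (mem_connectedComponentIn hw1)) ?_
    intro w' hw'
    refine ⟨Γ, hΓ, hz1, connectedComponentIn_subset _ _ hw', ?_⟩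
    rw [← connectedComponentIn_eq hw']
    exact hne
  have hSclosed : IsClosed S := by
    have hSeq : S = K ∩ {w : ℂ | Separates K ψ Q z w}ᶜ := by
      ext w
      simp [hSdef, Set.mem_inter_iff]
    rw [hSeq]
    exact hK.isClosed.inter hsepopen.isClosed_compl
  have hSsubK : S ⊆ K := fun w hw => hw.1
  have hScomp : IsCompact S := hK.of_isClosed_subset hSclosed hSsubK
  have hfib_eq : fiber K ψ Q z = connectedComponentIn S z := rfl
  have hfib_sub : fiber K ψ Q z ⊆ S := connectedComponentIn_subset _ _
  have hfib_comp : IsCompact (fiber K ψ Q z) := by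
    haveI := isCompact_iff_compactSpace.mp hScomp
    rw [hfib_eq, connectedComponentIn_eq_image hzS]
    exact (isClosed_connectedComponent.isCompact).image continuous_subtype_val
  have hfib_closed : IsClosed (fiber K ψ Q z) := hfib_comp.isClosed
  have hzfib : z ∈ fiber K ψ Q z := mem_connectedComponentIn hzS
  have hfib_conn : IsConnected (fiber K ψ Q z) := ⟨⟨z, hzfib⟩, isPreconnected_connectedComponentIn⟩
  refine ⟨hfib_comp, hfib_conn, ?_⟩
  intro w hw hb
  set V := connectedComponentIn (fiber K ψ Q z)ᶜ w with hVdef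
  have hwV : w ∈ V := mem_connectedComponentIn hw
  have hVopen : IsOpen V := hfib_closed.isOpen_compl.connectedComponentIn
  have hVK : V ⊆ K := by
    intro y hyV
    by_contra hyK
    apply hfull y hyK
    refine hb.subset ?_
    have h1 : connectedComponentIn Kᶜ y ⊆ connectedComponentIn (fiber K ψ Q z)ᶜ y :=
      connectedComponentIn_mono y (compl_subset_compl.mpr (hfib_sub.trans hSsubK))
    rwa [← connectedComponentIn_eq hyV] at h1
  have hVsep : ∀ x' ∈ V, ¬ Separates K ψ Q z x' := by
    intro x' hx' hsep
    obtain ⟨Γ, hΓ, hzΓ, hxΓ, hne⟩ := hsep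
    have hCsub : connectedComponentIn Γᶜ x' ⊆ (fiber K ψ Q z)ᶜ := by
      intro y hy hyfib
      have hyS : y ∈ S := hfib_sub hyfib
      refine hyS.2 ⟨Γ, hΓ, hzΓ, connectedComponentIn_subset _ _ hy, ?_⟩
      rw [← connectedComponentIn_eq hy]
      exact hne
    have hCV : connectedComponentIn Γᶜ x' ⊆ V := by
      have hxmem : x' ∈ (Γᶜ : Set ℂ) := hxΓ
      have h1 := IsPreconnected.subset_connectedComponentIn
        (s := connectedComponentIn Γᶜ x') (F := (fiber K ψ Q z)ᶜ) (x := x')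
        isPreconnected_connectedComponentIn (mem_connectedComponentIn hxmem) hCsub
      rwa [← connectedComponentIn_eq hx'] at h1
    exact aux_no_bounded_comp hK hψ hΓ hxΓ (hb.subset hCV) (hCV.trans hVK)
  have hVS : V ⊆ S := fun y hy => ⟨hVK hy, hVsep y hy⟩
  have hfrV : frontier V ⊆ fiber K ψ Q z := by
    intro y hy
    have := aux_frontier_cci hfib_closed.isOpen_compl (x := w) hy
    simpa using this
  have hfrne : (frontier V).Nonempty := by
    by_contra hfe
    rw [Set.not_nonempty_iff_eq_empty] at hfe
    have hclopen : IsClopen V := by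
      rw [← isClopen_iff_frontier_eq_empty] at hfe
      exact hfe
    have hVuniv : V = Set.univ := hclopen.eq_univ ⟨w, hwV⟩
    rw [hVuniv] at hb
    obtain ⟨r, hr⟩ := hb.subset_closedBall 0
    have h2 := hr (Set.mem_univ ((|r| + 1 : ℝ) : ℂ))
    rw [Metric.mem_closedBall, Complex.dist_eq, sub_zero, Complex.norm_real, Real.norm_eq_abs] at h2
    have h3 : |r| + 1 ≤ r := by
      rwa [abs_of_nonneg (by positivity : (0:ℝ) ≤ |r| + 1)] at h2
    linarith [abs_nonneg r, le_abs_self r]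
  obtain ⟨y₀, hy₀⟩ := hfrne
  have hclV : closure V ⊆ V ∪ fiber K ψ Q z := by
    intro y hy
    by_cases hyV : y ∈ V
    · exact Or.inl hyV
    · refine Or.inr (hfrV ?_)
      rw [hVopen.frontier_eq]
      exact ⟨hy, hyV⟩
  have hEconn : IsPreconnected (closure V ∪ fiber K ψ Q z) := by
    apply IsPreconnected.union y₀
    · exact frontier_subset_closure hy₀
    · exact hfrV hy₀
    · exact isPreconnected_connectedComponentIn.closure
    · exact isPreconnected_connectedComponentIn
  have hEsub : closure V ∪ fiber K ψ Q z ⊆ S := by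
    intro y hy
    rcases hy with hy | hy
    · rcases hclV hy with h | h
      · exact hVS h
      · exact hfib_sub h
    · exact hfib_sub hy
  have hEfib : closure V ∪ fiber K ψ Q z ⊆ fiber K ψ Q z := by
    rw [hfib_eq]
    exact hEconn.subset_connectedComponentIn (Or.inr hzfib) hEsub
  exact hw (hEfib (Or.inl (subset_closure hwV)))
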